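/- Fix m ∈ ℕ and h ∈ (0,1), and set μ_m := −1/log₂(a_m) and γ := 2^{m/μ_m}·f_m(h). Then for every n ≥ m, the number of binary strings b ∈ {0,1}^n with H_b(h) ≤ (γ/4)·2^{−n/μ_m} is at most 2^n·((1−h) − (γ/2)·2^{−n/μ_m}). -/

import Mathlib

/-- The polynomials `f_n : [0,1] → ℝ` defined by `f_0(h) = h(1-h)` and
`f_n(h) = (f_{n-1}(h^2) + f_{n-1}(1-(1-h)^2))/2`. -/
noncomputable def f : ℕ → ℝ → ℝ
  | 0, h => h * (1 - h)
  | n + 1, h => (f n (h ^ 2) + f n (1 - (1 - h) ^ 2)) / 2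

/-- `a_m := inf_{h ∈ (0,1)} f_{m+1}(h) / f_m(h)`. -/
noncomputable def a (m : ℕ) : ℝ :=
  sInf ((fun h => f (m + 1) h / f m h) '' Set.Ioo (0 : ℝ) 1)

/-- `H_b(h)`: starting from `h_0 = h`, apply `x ↦ x²` when the bit is `1` (true) and
`x ↦ 1 - (1-x)²` when the bit is `0` (false), following the bits `b 0, b 1, …` in order.
This is the erasure probability of the polar sub-channel of `BEC(h)` indexed by `b`. -/
noncomputable def Hb {n : ℕ} (b : Fin n → Bool) (h : ℝ) : ℝ :=
  (List.ofFn b).foldl (fun x bi => if bi then x ^ 2 else 1 - (1 - x) ^ 2) h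

/-- `μ_m := -1 / log₂ a_m`. -/
noncomputable def mu (m : ℕ) : ℝ := -1 / Real.logb 2 (a m)

/-- `γ := 2^(m/μ_m) · f_m(h)`. -/
noncomputable def gam (m : ℕ) (h : ℝ) : ℝ := (2 : ℝ) ^ ((m : ℝ) / mu m) * f m h

lemma sq_mem_Ioo {h : ℝ} (hh : h ∈ Set.Ioo (0:ℝ) 1) :
    h ^ 2 ∈ Set.Ioo (0:ℝ) 1 := by
  obtain ⟨h0, h1⟩ := hh; constructor <;> nlinarith

lemma vsq_mem_Ioo {h : ℝ} (hh : h ∈ Set.Ioo (0:ℝ) 1) :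
    1 - (1 - h) ^ 2 ∈ Set.Ioo (0:ℝ) 1 := by
  obtain ⟨h0, h1⟩ := hh; constructor <;> nlinarith

lemma sq_mem_Icc {h : ℝ} (hh : h ∈ Set.Icc (0:ℝ) 1) :
    h ^ 2 ∈ Set.Icc (0:ℝ) 1 := by
  obtain ⟨h0, h1⟩ := hh; constructor <;> nlinarith

lemma vsq_mem_Icc {h : ℝ} (hh : h ∈ Set.Icc (0:ℝ) 1) :
    1 - (1 - h) ^ 2 ∈ Set.Icc (0:ℝ) 1 := by
  obtain ⟨h0, h1⟩ := hh; constructor <;> nlinarith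

lemma f_pos : ∀ m : ℕ, ∀ h ∈ Set.Ioo (0:ℝ) 1, 0 < f m h := by
  intro m
  induction m with
  | zero =>
    intro h hh
    obtain ⟨h0, h1⟩ := hh
    show 0 < h * (1 - h)
    nlinarith
  | succ k ih =>
    intro h hh
    have h1 := ih _ (sq_mem_Ioo hh)
    have h2 := ih _ (vsq_mem_Ioo hh)
    show 0 < (f k (h ^ 2) + f k (1 - (1 - h) ^ 2)) / 2
    linarith

lemma f_nonneg : ∀ m : ℕ, ∀ h ∈ Set.Icc (0:ℝ) 1, 0 ≤ f m h := by
  intro m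
  induction m with
  | zero =>
    intro h hh
    obtain ⟨h0, h1⟩ := hh
    show 0 ≤ h * (1 - h)
    nlinarith
  | succ k ih =>
    intro h hh
    have h1 := ih _ (sq_mem_Icc hh)
    have h2 := ih _ (vsq_mem_Icc hh)
    show 0 ≤ (f k (h ^ 2) + f k (1 - (1 - h) ^ 2)) / 2
    linarith

/-- Pointwise ratio bounds: `(3/4)·f_m ≤ f_{m+1} ≤ f_m` on `[0,1]`. -/
lemma f_ratio : ∀ m : ℕ, ∀ h ∈ Set.Icc (0:ℝ) 1,
    3/4 * f m h ≤ f (m+1) h ∧ f (m+1) h ≤ f m h := by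
  intro m
  induction m with
  | zero =>
    intro h hh
    obtain ⟨h0, h1⟩ := hh
    have e1 : f 1 h = (h ^ 2 * (1 - h ^ 2) + (1 - (1 - h) ^ 2) * (1 - (1 - (1 - h) ^ 2))) / 2 := rfl
    have e0 : f 0 h = h * (1 - h) := rfl
    rw [e1, e0]
    constructor
    · nlinarith [mul_nonneg (mul_nonneg h0 (by linarith : (0:ℝ) ≤ 1 - h)) (sq_nonneg (h - 1/2))]
    · nlinarith [sq_nonneg (h * (1 - h))]
  | succ k ih =>
    intro h hh
    have i1 := ih _ (sq_mem_Icc hh)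
    have i2 := ih _ (vsq_mem_Icc hh)
    have e1 : f (k+2) h = (f (k+1) (h ^ 2) + f (k+1) (1 - (1 - h) ^ 2)) / 2 := rfl
    have e0 : f (k+1) h = (f k (h ^ 2) + f k (1 - (1 - h) ^ 2)) / 2 := rfl
    rw [e1, e0]
    constructor
    · linarith [i1.1, i2.1]
    · linarith [i1.2, i2.2]

lemma a_bddBelow (m : ℕ) :
    BddBelow ((fun h => f (m + 1) h / f m h) '' Set.Ioo (0 : ℝ) 1) := by
  refine ⟨0, fun x hx => ?_⟩
  obtain ⟨h, hh, rfl⟩ := hx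
  exact div_nonneg (f_nonneg (m+1) h (Set.mem_Icc_of_Ioo hh)) (f_pos m h hh).le

lemma a_le_ratio (m : ℕ) {h : ℝ} (hh : h ∈ Set.Ioo (0:ℝ) 1) :
    a m ≤ f (m+1) h / f m h :=
  csInf_le (a_bddBelow m) ⟨h, hh, rfl⟩

lemma a_ge (m : ℕ) : 3/4 ≤ a m := by
  apply le_csInf
  · exact ⟨_, ⟨1/2, by norm_num, rfl⟩⟩
  · rintro x ⟨h, hh, rfl⟩
    have hp := f_pos m h hh
    have hr := (f_ratio m h (Set.mem_Icc_of_Ioo hh)).1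
    rw [le_div_iff₀ hp]
    linarith

lemma a_pos (m : ℕ) : 0 < a m := lt_of_lt_of_le (by norm_num) (a_ge m)

lemma a_le_one (m : ℕ) : a m ≤ 1 := by
  have hmem : (1/2 : ℝ) ∈ Set.Ioo (0:ℝ) 1 := by norm_num
  have h1 := a_le_ratio m hmem
  have hp := f_pos m (1/2) hmem
  have hr := (f_ratio m (1/2) (Set.mem_Icc_of_Ioo hmem)).2
  calc a m ≤ f (m+1) (1/2) / f m (1/2) := h1
    _ ≤ 1 := by rw [div_le_one hp]; exact hr

/-- `f_n ≥ a_m^{n-m}·f_m` on `(0,1)`. -/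
lemma f_lower (m : ℕ) : ∀ k : ℕ, ∀ h ∈ Set.Ioo (0:ℝ) 1,
    a m ^ k * f m h ≤ f (m + k) h := by
  intro k
  induction k with
  | zero => intro h hh; simp
  | succ j ih =>
    intro h hh
    have i1 := ih _ (sq_mem_Ioo hh)
    have i2 := ih _ (vsq_mem_Ioo hh)
    have e1 : f (m + (j+1)) h = (f (m + j) (h ^ 2) + f (m + j) (1 - (1 - h) ^ 2)) / 2 := by
      have : m + (j + 1) = (m + j) + 1 := by ring
      rw [this]; rfl
    have e0 : f (m+1) h = (f m (h ^ 2) + f m (1 - (1 - h) ^ 2)) / 2 := rfl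
    have ha := a_le_ratio m hh
    have hp := f_pos m h hh
    have ha' : a m * f m h ≤ f (m+1) h := by
      rw [le_div_iff₀ hp] at ha; linarith
    have hak : (0:ℝ) ≤ a m ^ j := pow_nonneg (a_pos m).le j
    calc a m ^ (j+1) * f m h = a m ^ j * (a m * f m h) := by ring
      _ ≤ a m ^ j * f (m+1) h := by
          exact mul_le_mul_of_nonneg_left ha' hak
      _ = a m ^ j * ((f m (h ^ 2) + f m (1 - (1 - h) ^ 2)) / 2) := by rw [e0]
      _ = (a m ^ j * f m (h ^ 2) + a m ^ j * f m (1 - (1 - h) ^ 2)) / 2 := by ring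
      _ ≤ (f (m + j) (h ^ 2) + f (m + j) (1 - (1 - h) ^ 2)) / 2 := by linarith
      _ = f (m + (j+1)) h := e1.symm

/-- `f_n(h) ≤ 1 - h` for all real `h`. -/
lemma f_le : ∀ n : ℕ, ∀ h : ℝ, f n h ≤ 1 - h := by
  intro n
  induction n with
  | zero => intro h; show h * (1 - h) ≤ 1 - h; nlinarith [sq_nonneg (1 - h)]
  | succ k ih =>
    intro h
    have i1 := ih (h ^ 2)
    have i2 := ih (1 - (1 - h) ^ 2)
    show (f k (h ^ 2) + f k (1 - (1 - h) ^ 2)) / 2 ≤ 1 - h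
    nlinarith

lemma Hb_cons {n : ℕ} (x : Bool) (b : Fin n → Bool) (h : ℝ) :
    Hb (Fin.cons x b) h = Hb b (if x then h ^ 2 else 1 - (1 - h) ^ 2) := by
  unfold Hb
  rw [List.ofFn_succ]
  simp [Fin.cons_succ, Fin.cons_zero]

lemma Hb_mem_Icc : ∀ (l : List Bool) (h : ℝ), h ∈ Set.Icc (0:ℝ) 1 →
    l.foldl (fun x bi => if bi then x ^ 2 else 1 - (1 - x) ^ 2) h ∈ Set.Icc (0:ℝ) 1 := by
  intro l
  induction l with
  | nil => intro h hh; exact hh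
  | cons c l ih =>
    intro h hh
    rw [List.foldl_cons]
    apply ih
    cases c
    · simpa using vsq_mem_Icc hh
    · simpa using sq_mem_Icc hh

lemma Hb_mem {n : ℕ} (b : Fin n → Bool) {h : ℝ} (hh : h ∈ Set.Icc (0:ℝ) 1) :
    Hb b h ∈ Set.Icc (0:ℝ) 1 :=
  Hb_mem_Icc (List.ofFn b) h hh

lemma sum_pi_succ {n : ℕ} (F : (Fin (n+1) → Bool) → ℝ) :
    ∑ b : Fin (n+1) → Bool, F b
      = ∑ b : Fin n → Bool, (F (Fin.cons true b) + F (Fin.cons false b)) := by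
  rw [← Fintype.sum_equiv (Fin.consEquiv (fun _ => Bool))
      (fun p => F (Fin.cons p.1 p.2)) F (fun p => rfl)]
  rw [Fintype.sum_prod_type]
  rw [Fintype.sum_bool]
  rw [← Finset.sum_add_distrib]

lemma sum_Hb : ∀ (n : ℕ) (h : ℝ), ∑ b : Fin n → Bool, Hb b h = 2 ^ n * h := by
  intro n
  induction n with
  | zero =>
    intro h
    simp [Hb]
  | succ k ih =>
    intro h
    rw [sum_pi_succ (fun b => Hb b h)]
    simp only [Hb_cons]
    rw [Finset.sum_add_distrib, ih, ih]
    norm_num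
    ring

lemma sum_g : ∀ (n : ℕ) (h : ℝ),
    ∑ b : Fin n → Bool, Hb b h * (1 - Hb b h) = 2 ^ n * f n h := by
  intro n
  induction n with
  | zero =>
    intro h
    simp [Hb]
    rfl
  | succ k ih =>
    intro h
    rw [sum_pi_succ (fun b => Hb b h * (1 - Hb b h))]
    simp only [Hb_cons]
    rw [Finset.sum_add_distrib, ih, ih]
    norm_num
    have e : f (k+1) h = (f k (h ^ 2) + f k (1 - (1 - h) ^ 2)) / 2 := rfl
    rw [e]
    ring

/-- The key rpow computation: `γ·2^{-n/μ} = f_m(h)·a_m^{n-m}`. -/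
lemma key_eq (m n : ℕ) (hn : m ≤ n) (h : ℝ) :
    gam m h * (2 : ℝ) ^ (-(n : ℝ) / mu m) = f m h * a m ^ (n - m) := by
  have ha := a_pos m
  unfold gam
  rw [mul_comm ((2:ℝ) ^ ((m:ℝ) / mu m)) (f m h), mul_assoc,
      ← Real.rpow_add (by norm_num : (0:ℝ) < 2), ← add_div]
  congr 1
  set c := Real.logb 2 (a m) with hc
  rcases eq_or_ne c 0 with h0 | h0
  · have ha1 : a m = 1 := by
      have hag := a_ge m
      rcases Real.logb_eq_zero.1 (hc ▸ h0) with h' | h' | h' | h' | h' | h'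
      · norm_num at h'
      · norm_num at h'
      · norm_num at h'
      · rw [h'] at hag; norm_num at hag
      · exact h'
      · rw [h'] at hag; norm_num at hag
    rw [ha1]
    have : mu m = 0 := by rw [mu, ← hc, h0]; simp
    rw [this]
    simp
  · have hmu : mu m = -1 / c := rfl
    have hexp : ((m:ℝ) + -(n:ℝ)) / mu m = ((n:ℝ) - (m:ℝ)) * c := by
      rw [hmu]; field_simp; ring
    rw [hexp]
    have hcast : ((n:ℝ) - (m:ℝ)) = ((n - m : ℕ) : ℝ) := by
      rw [Nat.cast_sub hn]
    rw [hcast, ← Real.rpow_natCast (a m) (n - m), ← Real.rpow_logb (by norm_num : (0:ℝ) < 2)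
      (by norm_num : (2:ℝ) ≠ 1) ha, ← Real.rpow_mul (by norm_num : (0:ℝ) ≤ 2), ← hc]
    ring_nf

open scoped Classical in
/-- For `n ≥ m`, the number of `b ∈ {0,1}^n` with `H_b(h) ≤ (γ/4)·2^(-n/μ_m)` is at most
`2^n·((1-h) - (γ/2)·2^(-n/μ_m))`, where `γ := 2^(m/μ_m)·f_m(h)`. -/
theorem count_good_indices_bound (m : ℕ) (h : ℝ) (hh : h ∈ Set.Ioo (0 : ℝ) 1)
    (n : ℕ) (hn : m ≤ n) :
    ((Finset.univ.filter fun b : Fin n → Bool =>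
        Hb b h ≤ gam m h / 4 * (2 : ℝ) ^ (-(n : ℝ) / mu m)).card : ℝ) ≤
      2 ^ n * ((1 - h) - gam m h / 2 * (2 : ℝ) ^ (-(n : ℝ) / mu m)) := by
  obtain ⟨h0, h1⟩ := hh
  set D : ℝ := f m h * a m ^ (n - m) with hD
  have hkey := key_eq m n hn h
  have h4 : gam m h / 4 * (2 : ℝ) ^ (-(n : ℝ) / mu m) = D / 4 := by
    rw [div_mul_eq_mul_div, hkey]
  have h2 : gam m h / 2 * (2 : ℝ) ^ (-(n : ℝ) / mu m) = D / 2 := by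
    rw [div_mul_eq_mul_div, hkey]
  rw [h4, h2]
  have hDpos : 0 < D := mul_pos (f_pos m h ⟨h0, h1⟩) (pow_pos (a_pos m) _)
  have hDle : D ≤ f n h := by
    have := f_lower m (n - m) h ⟨h0, h1⟩
    rwa [Nat.add_sub_cancel' hn, mul_comm] at this
  have hfle : f n h ≤ 1 - h := f_le n h
  have hDle1 : D ≤ 1 - h := hDle.trans hfle
  -- sums
  have hs1 : ∑ b : Fin n → Bool, (1 - Hb b h) = 2 ^ n * (1 - h) := by
    rw [Finset.sum_sub_distrib, sum_Hb]
    simp [Finset.card_univ]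
    ring
  have hs2 : ∑ b : Fin n → Bool, (1 - Hb b h) ^ 2
      = 2 ^ n * (1 - h) - 2 ^ n * f n h := by
    have : ∀ b : Fin n → Bool, (1 - Hb b h) ^ 2 = (1 - Hb b h) - Hb b h * (1 - Hb b h) := by
      intro b; ring
    rw [Finset.sum_congr rfl (fun b _ => this b), Finset.sum_sub_distrib, hs1, sum_g]
  set G := Finset.univ.filter fun b : Fin n → Bool => Hb b h ≤ D / 4 with hG
  have hGsum : (G.card : ℝ) * (1 - D/4) ^ 2 ≤ ∑ b : Fin n → Bool, (1 - Hb b h) ^ 2 := by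
    have hsub : ∑ b ∈ G, (1 - Hb b h) ^ 2 ≤ ∑ b : Fin n → Bool, (1 - Hb b h) ^ 2 :=
      Finset.sum_le_sum_of_subset_of_nonneg (Finset.subset_univ G)
        (fun b _ _ => sq_nonneg _)
    refine le_trans ?_ hsub
    calc (G.card : ℝ) * (1 - D/4) ^ 2 = ∑ _b ∈ G, (1 - D/4) ^ 2 := by
          rw [Finset.sum_const, nsmul_eq_mul]
      _ ≤ ∑ b ∈ G, (1 - Hb b h) ^ 2 := by
          apply Finset.sum_le_sum
          intro b hb
          have hble : Hb b h ≤ D / 4 := (Finset.mem_filter.1 hb).2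
          have hd4 : 0 ≤ 1 - D / 4 := by linarith
          have hmono : 1 - D / 4 ≤ 1 - Hb b h := by linarith
          exact pow_le_pow_left₀ hd4 hmono 2
  have hKey : (G.card : ℝ) * (1 - D/4) ^ 2 ≤ 2 ^ n * (1 - h) - 2 ^ n * D := by
    have := hGsum.trans (le_of_eq hs2)
    have hpow : (0:ℝ) < 2 ^ n := by positivity
    nlinarith
  -- final algebra
  have hq : (0:ℝ) < (1 - D/4) ^ 2 := by
    have : 0 < 1 - D / 4 := by linarith
    positivity
  have hpoly : (1 - h) - D ≤ ((1 - h) - D/2) * (1 - D/4) ^ 2 := by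
    nlinarith [mul_nonneg hDpos.le (sub_nonneg.2 hDle1),
      mul_nonneg (mul_nonneg hDpos.le hDpos.le) (sub_nonneg.2 hDle1),
      mul_nonneg (mul_nonneg hDpos.le hDpos.le) h0.le,
      mul_nonneg hDpos.le h0.le, sq_nonneg D]
  have hpow : (0:ℝ) < 2 ^ n := by positivity
  have : (G.card : ℝ) * (1 - D/4) ^ 2 ≤ (2 ^ n * ((1 - h) - D/2)) * (1 - D/4) ^ 2 := by
    calc (G.card : ℝ) * (1 - D/4) ^ 2 ≤ 2 ^ n * (1 - h) - 2 ^ n * D := hKey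
      _ = 2 ^ n * ((1 - h) - D) := by ring
      _ ≤ 2 ^ n * (((1 - h) - D/2) * (1 - D/4) ^ 2) :=
          mul_le_mul_of_nonneg_left hpoly hpow.le
      _ = (2 ^ n * ((1 - h) - D/2)) * (1 - D/4) ^ 2 := by ring
  exact le_of_mul_le_mul_right this hq
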